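/- arXiv:1301.5679 — 4 statements merged into one kernel-verified Lean document; each statement's English description precedes it below -/
import Mathlib

section
/- Let D, D′ ⊆ ℝ² be open, let f : D → ℝ³ be a C^{1M} regular immersion, and let N : D → ℝ³ be C¹ with ‖N‖ ≡ 1, ⟨N, f_x⟩ ≡ 0 and ⟨N, f_y⟩ ≡ 0. Let T : D′ → D be a C¹ diffeomorphism such that f̃ := f ∘ T is also C^{1M}, and set Ñ := N ∘ T. Define E = ⟨f_x,f_x⟩, F = ⟨f_x,f_y⟩, G = ⟨f_y,f_y⟩, ℓ = −⟨f_x,N_x⟩, m = −⟨f_x,N_y⟩, n = −⟨f_y,N_y⟩ and K = (ℓn − m²)/(EG − F²) on D, and define Ẽ, F̃, G̃, ℓ̃, m̃, ñ, K̃ analogously on D′ using f̃, Ñ and the coordinates (u,v) of D′. Then K̃ = K ∘ T on D′. -/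
noncomputable section

open Real Set

abbrev E3 : Type := EuclideanSpace ℝ (Fin 3)

/-- Partial derivative in the `x`-direction. -/
noncomputable def pdx {E : Type*} [NormedAddCommGroup E] [NormedSpace ℝ E]
    (f : ℝ × ℝ → E) (p : ℝ × ℝ) : E := lineDeriv ℝ f p ((1 : ℝ), (0 : ℝ))

/-- Partial derivative in the `y`-direction. -/
noncomputable def pdy {E : Type*} [NormedAddCommGroup E] [NormedSpace ℝ E]
    (f : ℝ × ℝ → E) (p : ℝ × ℝ) : E := lineDeriv ℝ f p ((0 : ℝ), (1 : ℝ))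

/-- `f` is C¹ on `D`, and the mixed second partials `∂y∂x f` and `∂x∂y f`
exist at every point of `D`, are continuous on `D`, and agree on `D`. -/
def C1M {E : Type*} [NormedAddCommGroup E] [NormedSpace ℝ E]
    (D : Set (ℝ × ℝ)) (f : ℝ × ℝ → E) : Prop :=
  ContDiffOn ℝ 1 f D ∧
  (∀ p ∈ D, LineDifferentiableAt ℝ (pdx f) p ((0 : ℝ), (1 : ℝ))) ∧
  (∀ p ∈ D, LineDifferentiableAt ℝ (pdy f) p ((1 : ℝ), (0 : ℝ))) ∧
  ContinuousOn (pdy (pdx f)) D ∧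
  ContinuousOn (pdx (pdy f)) D ∧
  (∀ p ∈ D, pdy (pdx f) p = pdx (pdy f) p)

/-- The cross product on ℝ³. -/
noncomputable def cross3 (a b : E3) : E3 :=
  (WithLp.equiv 2 (Fin 3 → ℝ)).symm
    ![a 1 * b 2 - a 2 * b 1, a 2 * b 0 - a 0 * b 2, a 0 * b 1 - a 1 * b 0]

/-- The Euclidean inner product on ℝ³. -/
noncomputable def dot (a b : E3) : ℝ := inner ℝ a b

/-- `N : D → S²` is weakly harmonic: it is C^{1M}, weakly regular, takes values in the
unit sphere, and `N_xy = N_yx = h • N` for some scalar function `h`. -/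
def WeakHarmonic (D : Set (ℝ × ℝ)) (N : ℝ × ℝ → E3) : Prop :=
  C1M D N ∧ (∀ p ∈ D, ‖N p‖ = 1) ∧
  (∀ p ∈ D, pdx N p ≠ 0 ∧ pdy N p ≠ 0) ∧
  ∃ h : ℝ × ℝ → ℝ, ∀ p ∈ D, pdy (pdx N) p = h p • N p ∧ pdx (pdy N) p = h p • N p

/-- A weakly-regular C^{1M} ps-front with associated weakly harmonic map `N`. -/
def PsFront (D : Set (ℝ × ℝ)) (f N : ℝ × ℝ → E3) : Prop :=
  C1M D f ∧ (∀ p ∈ D, pdx f p ≠ 0 ∧ pdy f p ≠ 0) ∧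
  WeakHarmonic D N ∧
  ∀ p ∈ D, pdx f p = cross3 (N p) (pdx N p) ∧ pdy f p = -cross3 (N p) (pdy N p)


/-- The Gauss curvature `K = (ℓn − m²)/(EG − F²)` of a C^{1M} immersion with unit normal `N`. -/
noncomputable def Kof (f N : ℝ × ℝ → E3) (p : ℝ × ℝ) : ℝ :=
  ((-dot (pdx f p) (pdx N p)) * (-dot (pdy f p) (pdy N p)) -
      (-dot (pdx f p) (pdy N p)) ^ 2) /
    (dot (pdx f p) (pdx f p) * dot (pdy f p) (pdy f p) - dot (pdx f p) (pdy f p) ^ 2)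

-- chain rule
lemma chain_rule (T : ℝ × ℝ → ℝ × ℝ) (g : ℝ × ℝ → E3) (p : ℝ × ℝ)
    (hT : DifferentiableAt ℝ T p) (hg : DifferentiableAt ℝ g (T p)) (v : ℝ × ℝ) :
    lineDeriv ℝ (g ∘ T) p v
      = (fderiv ℝ T p v).1 • pdx g (T p) + (fderiv ℝ T p v).2 • pdy g (T p) := by
  have hgT : DifferentiableAt ℝ (g ∘ T) p := hg.comp p hT
  rw [hgT.lineDeriv_eq_fderiv, fderiv_comp p hg hT]
  have h1 : fderiv ℝ T p v
      = (fderiv ℝ T p v).1 • ((1:ℝ),(0:ℝ)) + (fderiv ℝ T p v).2 • ((0:ℝ),(1:ℝ)) := by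
    ext <;> simp
  rw [ContinuousLinearMap.comp_apply]
  conv_lhs => rw [h1]
  rw [map_add, map_smul, map_smul, pdx, pdy, hg.lineDeriv_eq_fderiv, hg.lineDeriv_eq_fderiv]

-- product rule / vanishing lemma
lemma inner_lineDeriv_zero (D : Set (ℝ × ℝ)) (hD : IsOpen D)
    (N g : ℝ × ℝ → E3) (q v : ℝ × ℝ) (hq : q ∈ D)
    (hN : DifferentiableAt ℝ N q) (hg : LineDifferentiableAt ℝ g q v)
    (h0 : ∀ r ∈ D, (inner ℝ (N r) (g r) : ℝ) = 0) :
    (inner ℝ (N q) (lineDeriv ℝ g q v) : ℝ) + inner ℝ (lineDeriv ℝ N q v) (g q) = 0 := by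
  have h1 : HasDerivAt (fun t : ℝ => N (q + t • v)) (lineDeriv ℝ N q v) 0 :=
    (hN.hasFDerivAt.hasLineDerivAt v).lineDifferentiableAt.hasLineDerivAt
  have h2 : HasDerivAt (fun t : ℝ => g (q + t • v)) (lineDeriv ℝ g q v) 0 :=
    hg.hasLineDerivAt
  have h3 : HasDerivAt (fun t : ℝ => (inner ℝ (N (q + t • v)) (g (q + t • v)) : ℝ))
      ((inner ℝ (N (q + (0:ℝ) • v)) (lineDeriv ℝ g q v) : ℝ)
        + inner ℝ (lineDeriv ℝ N q v) (g (q + (0:ℝ) • v))) 0 := h1.inner ℝ h2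
  simp only [zero_smul, add_zero] at h3
  have hev : (fun t : ℝ => (inner ℝ (N (q + t • v)) (g (q + t • v)) : ℝ))
      =ᶠ[nhds (0:ℝ)] fun _ => (0:ℝ) := by
    have hc : ContinuousAt (fun t : ℝ => q + t • v) 0 := by fun_prop
    have hmem : D ∈ nhds (q + (0:ℝ) • v) := by
      rw [hD.mem_nhds_iff]; simpa using hq
    filter_upwards [hc.preimage_mem_nhds (by simpa using hmem)] with t ht
    exact h0 _ ht
  have h4 := (hasDerivAt_const (0:ℝ) (0:ℝ)).congr_of_eventuallyEq hev
  exact (h3.unique h4)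

lemma div_congr_det (k X Y A B : ℝ) (hk : k ≠ 0) (hA : A = k * X) (hB : B = k * Y) :
    A / B = X / Y := by rw [hA, hB, mul_div_mul_left _ _ hk]

/-- The Gauss curvature of a regular C^{1M} immersion is invariant under a C¹ change of
coordinates `T` for which `f ∘ T` is again C^{1M}. -/
theorem stmt_1 (D D' : Set (ℝ × ℝ)) (hD : IsOpen D) (hD' : IsOpen D')
    (f N : ℝ × ℝ → E3)
    (hf : C1M D f)
    (hreg : ∀ p ∈ D, LinearIndependent ℝ ![pdx f p, pdy f p])
    (hN : ContDiffOn ℝ 1 N D)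
    (hNunit : ∀ p ∈ D, ‖N p‖ = 1)
    (hNfx : ∀ p ∈ D, dot (N p) (pdx f p) = 0)
    (hNfy : ∀ p ∈ D, dot (N p) (pdy f p) = 0)
    (T Tinv : ℝ × ℝ → ℝ × ℝ)
    (hT : ContDiffOn ℝ 1 T D') (hTinv : ContDiffOn ℝ 1 Tinv D)
    (hTbij : Set.BijOn T D' D)
    (hTl : ∀ p ∈ D', Tinv (T p) = p) (hTr : ∀ q ∈ D, T (Tinv q) = q)
    (hfT : C1M D' (f ∘ T)) :
    ∀ p ∈ D', Kof (f ∘ T) (N ∘ T) p = Kof f N (T p) := by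
  intro p hp
  have hq : T p ∈ D := hTbij.mapsTo hp
  have hTd : DifferentiableAt ℝ T p := (hT.contDiffAt (hD'.mem_nhds hp)).differentiableAt one_ne_zero
  have hfd : DifferentiableAt ℝ f (T p) :=
    (hf.1.contDiffAt (hD.mem_nhds hq)).differentiableAt one_ne_zero
  have hNd : DifferentiableAt ℝ N (T p) := (hN.contDiffAt (hD.mem_nhds hq)).differentiableAt one_ne_zero
  have hTinvd : DifferentiableAt ℝ Tinv (T p) :=
    (hTinv.contDiffAt (hD.mem_nhds hq)).differentiableAt one_ne_zero
  set q := T p with hqd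
  set a := (fderiv ℝ T p ((1:ℝ),(0:ℝ))).1 with ha
  set c := (fderiv ℝ T p ((1:ℝ),(0:ℝ))).2 with hc
  set b := (fderiv ℝ T p ((0:ℝ),(1:ℝ))).1 with hb
  set d := (fderiv ℝ T p ((0:ℝ),(1:ℝ))).2 with hd
  -- the derivative of T at p is injective
  have hinv : ∀ v : ℝ × ℝ, fderiv ℝ Tinv q (fderiv ℝ T p v) = v := by
    intro v
    have hev : (Tinv ∘ T) =ᶠ[nhds p] id := by
      filter_upwards [hD'.mem_nhds hp] with r hr
      exact hTl r hr
    have h1 : fderiv ℝ (Tinv ∘ T) p = fderiv ℝ (id : ℝ × ℝ → ℝ × ℝ) p := hev.fderiv_eq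
    rw [fderiv_comp p hTinvd hTd, fderiv_id] at h1
    simpa using congrFun (congrArg DFunLike.coe h1) v
  have hinj : Function.Injective (fderiv ℝ T p) := by
    intro u v huv
    rw [← hinv u, huv, hinv v]
  have lcomb : ∀ s t : ℝ, fderiv ℝ T p (s, t) = (s * a + t * b, s * c + t * d) := by
    intro s t
    have e : ((s, t) : ℝ × ℝ) = s • ((1:ℝ),(0:ℝ)) + t • ((0:ℝ),(1:ℝ)) := by
      simp [Prod.ext_iff]
    rw [e, map_add, map_smul, map_smul]
    simp [Prod.ext_iff, smul_eq_mul]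
    exact ⟨rfl, rfl⟩
  have hdet : a * d - b * c ≠ 0 := by
    intro h0
    have k1 : ((d, -c) : ℝ × ℝ) = 0 := by
      apply hinj
      rw [lcomb, map_zero]
      simp only [Prod.ext_iff, Prod.fst_zero, Prod.snd_zero]
      constructor <;> nlinarith [h0]
    have k2 : ((-b, a) : ℝ × ℝ) = 0 := by
      apply hinj
      rw [lcomb, map_zero]
      simp only [Prod.ext_iff, Prod.fst_zero, Prod.snd_zero]
      constructor <;> nlinarith [h0]
    rw [Prod.ext_iff] at k1 k2
    obtain ⟨k1a, k1b⟩ := k1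
    obtain ⟨k2a, k2b⟩ := k2
    have hz : fderiv ℝ T p ((1:ℝ),(0:ℝ)) = 0 := by
      rw [lcomb]
      simp only [Prod.ext_iff, Prod.fst_zero, Prod.snd_zero] at *
      constructor <;> nlinarith
    have := hinv ((1:ℝ),(0:ℝ))
    rw [hz, map_zero] at this
    exact one_ne_zero (congrArg Prod.fst this).symm
  -- symmetry of the mixed second fundamental form coefficient
  have S1 := inner_lineDeriv_zero D hD N (pdx f) q ((0:ℝ),(1:ℝ)) hq hNd (hf.2.1 q hq)
    (fun r hr => hNfx r hr)
  have S2 := inner_lineDeriv_zero D hD N (pdy f) q ((1:ℝ),(0:ℝ)) hq hNd (hf.2.2.1 q hq)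
    (fun r hr => hNfy r hr)
  have hmix : pdy (pdx f) q = pdx (pdy f) q := hf.2.2.2.2.2 q hq
  change (inner ℝ (N q) (pdy (pdx f) q) : ℝ) + inner ℝ (pdy N q) (pdx f q) = 0 at S1
  change (inner ℝ (N q) (pdx (pdy f) q) : ℝ) + inner ℝ (pdx N q) (pdy f q) = 0 at S2
  rw [hmix] at S1
  have S : (inner ℝ (pdx f q) (pdy N q) : ℝ) = inner ℝ (pdy f q) (pdx N q) := by
    have c1 := real_inner_comm (pdy N q) (pdx f q)
    have c2 := real_inner_comm (pdx N q) (pdy f q)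
    linarith
  -- chain rule
  have hfu : pdx (f ∘ T) p = a • pdx f q + c • pdy f q := chain_rule T f p hTd hfd _
  have hfv : pdy (f ∘ T) p = b • pdx f q + d • pdy f q := chain_rule T f p hTd hfd _
  have hNu : pdx (N ∘ T) p = a • pdx N q + c • pdy N q := chain_rule T N p hTd hNd _
  have hNv : pdy (N ∘ T) p = b • pdx N q + d • pdy N q := chain_rule T N p hTd hNd _
  have e1 : dot (pdx (f ∘ T) p) (pdx (N ∘ T) p)
      = a * a * (inner ℝ (pdx f q) (pdx N q) : ℝ) + a * c * (inner ℝ (pdx f q) (pdy N q) : ℝ)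
        + c * a * (inner ℝ (pdx f q) (pdy N q) : ℝ) + c * c * (inner ℝ (pdy f q) (pdy N q) : ℝ) := by
    simp only [dot, hfu, hNu, inner_add_left, inner_add_right, real_inner_smul_left,
      real_inner_smul_right]
    rw [← S]; ring
  have e2 : dot (pdx (f ∘ T) p) (pdy (N ∘ T) p)
      = a * b * (inner ℝ (pdx f q) (pdx N q) : ℝ) + a * d * (inner ℝ (pdx f q) (pdy N q) : ℝ)
        + c * b * (inner ℝ (pdx f q) (pdy N q) : ℝ) + c * d * (inner ℝ (pdy f q) (pdy N q) : ℝ) := by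
    simp only [dot, hfu, hNv, inner_add_left, inner_add_right, real_inner_smul_left,
      real_inner_smul_right]
    rw [← S]; ring
  have e3 : dot (pdy (f ∘ T) p) (pdy (N ∘ T) p)
      = b * b * (inner ℝ (pdx f q) (pdx N q) : ℝ) + b * d * (inner ℝ (pdx f q) (pdy N q) : ℝ)
        + d * b * (inner ℝ (pdx f q) (pdy N q) : ℝ) + d * d * (inner ℝ (pdy f q) (pdy N q) : ℝ) := by
    simp only [dot, hfv, hNv, inner_add_left, inner_add_right, real_inner_smul_left,
      real_inner_smul_right]
    rw [← S]; ring
  have e4 : dot (pdx (f ∘ T) p) (pdx (f ∘ T) p)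
      = a * a * (inner ℝ (pdx f q) (pdx f q) : ℝ) + a * c * (inner ℝ (pdx f q) (pdy f q) : ℝ)
        + c * a * (inner ℝ (pdx f q) (pdy f q) : ℝ) + c * c * (inner ℝ (pdy f q) (pdy f q) : ℝ) := by
    simp only [dot, hfu, inner_add_left, inner_add_right, real_inner_smul_left,
      real_inner_smul_right]
    rw [real_inner_comm (pdx f q) (pdy f q)]; ring
  have e5 : dot (pdx (f ∘ T) p) (pdy (f ∘ T) p)
      = a * b * (inner ℝ (pdx f q) (pdx f q) : ℝ) + a * d * (inner ℝ (pdx f q) (pdy f q) : ℝ)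
        + c * b * (inner ℝ (pdx f q) (pdy f q) : ℝ) + c * d * (inner ℝ (pdy f q) (pdy f q) : ℝ) := by
    simp only [dot, hfu, hfv, inner_add_left, inner_add_right, real_inner_smul_left,
      real_inner_smul_right]
    rw [real_inner_comm (pdx f q) (pdy f q)]; ring
  have e6 : dot (pdy (f ∘ T) p) (pdy (f ∘ T) p)
      = b * b * (inner ℝ (pdx f q) (pdx f q) : ℝ) + b * d * (inner ℝ (pdx f q) (pdy f q) : ℝ)
        + d * b * (inner ℝ (pdx f q) (pdy f q) : ℝ) + d * d * (inner ℝ (pdy f q) (pdy f q) : ℝ) := by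
    simp only [dot, hfv, inner_add_left, inner_add_right, real_inner_smul_left,
      real_inner_smul_right]
    rw [real_inner_comm (pdx f q) (pdy f q)]; ring
  rw [Kof, Kof, e1, e2, e3, e4, e5, e6]
  simp only [dot]
  exact div_congr_det ((a * d - b * c) ^ 2) _ _ _ _ (pow_ne_zero 2 hdet) (by ring) (by ring)


end
end

section
/- Let D = I × J be a product of open intervals in ℝ² and let N : D → ℝ³ be a weakly harmonic map into the unit sphere (i.e., N is C^{1M}, ‖N‖ ≡ 1, N_x(p) ≠ 0 and N_y(p) ≠ 0 for all p, and there is h : D → ℝ with N_xy = N_yx = h·N on D). Then there exists a C^{1M} map f : D → ℝ³ with f_x = N × N_x and f_y = −N × N_y on D; moreover f is weakly regular. Further, for ANY C¹ map f : D → ℝ³ satisfying f_x = N × N_x and f_y = −N × N_y (with N : D → S² merely C¹ satisfying ⟨N,N_x⟩ = ⟨N,N_y⟩ = 0) and any p ∈ D: f_x(p), f_y(p) are linearly independent if and only if N_x(p), N_y(p) are linearly independent; and (f_x(p) ≠ 0 and f_y(p) ≠ 0) if and only if (N_x(p) ≠ 0 and N_y(p) ≠ 0). -/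
noncomputable section

open Real Set

/- ### Auxiliary lemmas -/

section Aux

open Filter Topology Metric MeasureTheory intervalIntegral

lemma cross3_apply' (a b : E3) (i : Fin 3) :
    cross3 a b i = ![a 1 * b 2 - a 2 * b 1, a 2 * b 0 - a 0 * b 2, a 0 * b 1 - a 1 * b 0] i := rfl

lemma cross3_self' (a : E3) : cross3 a a = 0 := by
  ext i; fin_cases i <;> simp [cross3_apply'] <;> ring
lemma cross3_skew (a b : E3) : cross3 a b = -cross3 b a := by
  ext i; fin_cases i <;> simp [cross3_apply'] <;> ring
lemma cross3_add_right (n a b : E3) : cross3 n (a + b) = cross3 n a + cross3 n b := by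
  ext i; fin_cases i <;> simp [cross3_apply'] <;> ring
lemma cross3_smul_right (n : E3) (r : ℝ) (a : E3) : cross3 n (r • a) = r • cross3 n a := by
  ext i; fin_cases i <;> simp [cross3_apply'] <;> ring
lemma cross3_add_left (n m a : E3) : cross3 (n + m) a = cross3 n a + cross3 m a := by
  ext i; fin_cases i <;> simp [cross3_apply'] <;> ring
lemma cross3_smul_left (r : ℝ) (n a : E3) : cross3 (r • n) a = r • cross3 n a := by
  ext i; fin_cases i <;> simp [cross3_apply'] <;> ring
lemma cross3_zero_right (n : E3) : cross3 n 0 = 0 := by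
  ext i; fin_cases i <;> simp [cross3_apply']
lemma dot_expand (a b : E3) : dot a b = a 0 * b 0 + a 1 * b 1 + a 2 * b 2 := by
  simp [dot, PiLp.inner_apply, RCLike.inner_apply, Fin.sum_univ_three]; ring
lemma lagrange (n a : E3) :
    dot (cross3 n a) (cross3 n a) + dot n a * dot n a = dot n n * dot a a := by
  simp [dot_expand, cross3_apply']; ring

/-- cross product as a continuous bilinear map -/
noncomputable def crossB : E3 →L[ℝ] E3 →L[ℝ] E3 :=
  LinearMap.toContinuousLinearMap
  { toFun := fun a => LinearMap.toContinuousLinearMap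
      { toFun := fun b => cross3 a b
        map_add' := fun b c => cross3_add_right a b c
        map_smul' := fun r b => cross3_smul_right a r b }
    map_add' := fun a b => by
      ext c : 1
      exact cross3_add_left a b c
    map_smul' := fun r a => by
      ext c : 1
      exact cross3_smul_left r a c }

@[simp] lemma crossB_apply (a b : E3) : crossB a b = cross3 a b := rfl

lemma eq_zero_of_cross3 {n a : E3} (hn : ‖n‖ = 1) (hna : dot n a = 0)
    (hc : cross3 n a = 0) : a = 0 := by
  have hl := lagrange n a
  rw [hc, hna] at hl
  have hnn : dot n n = 1 := by
    rw [dot, real_inner_self_eq_norm_mul_norm, hn]; norm_num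
  rw [hnn, one_mul] at hl
  have h0 : dot (0 : E3) (0 : E3) = 0 := by simp [dot]
  have haa : dot a a = 0 := by rw [← hl, h0]; ring
  exact inner_self_eq_zero (𝕜 := ℝ) (x := a) |>.1 (by rw [← haa]; rfl)

lemma cross3_ne_zero {n a : E3} (hn : ‖n‖ = 1) (hna : dot n a = 0) (ha : a ≠ 0) :
    cross3 n a ≠ 0 := fun hc => ha (eq_zero_of_cross3 hn hna hc)

lemma part2_core (n a b : E3) (hn : ‖n‖ = 1) (ha : dot n a = 0) (hb : dot n b = 0) :
    (LinearIndependent ℝ ![cross3 n a, -cross3 n b] ↔ LinearIndependent ℝ ![a, b]) ∧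
    ((cross3 n a ≠ 0 ∧ -cross3 n b ≠ 0) ↔ (a ≠ 0 ∧ b ≠ 0)) := by
  have hcomb : ∀ s t : ℝ, cross3 n (s • a + t • b) = s • cross3 n a + (-t) • -cross3 n b := by
    intro s t
    rw [cross3_add_right, cross3_smul_right, cross3_smul_right]
    module
  have hdotcomb : ∀ s t : ℝ, dot n (s • a + t • b) = 0 := by
    intro s t
    have e : dot n (s • a + t • b) = s * dot n a + t * dot n b := by
      simp [dot, inner_add_right, real_inner_smul_right, Finset.mul_sum]
    rw [e, ha, hb]; ring
  constructor
  · rw [LinearIndependent.pair_iff, LinearIndependent.pair_iff]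
    constructor
    · intro H s t hst
      have h0 : s • cross3 n a + (-t) • -cross3 n b = 0 := by
        rw [← hcomb, hst, cross3_zero_right]
      obtain ⟨h1, h2⟩ := H s (-t) h0
      exact ⟨h1, by linarith [neg_eq_zero.mp h2]⟩
    · intro H s t hst
      have h0 : s • a + (-t) • b = 0 := by
        apply eq_zero_of_cross3 hn (hdotcomb s (-t))
        rw [hcomb s (-t)]
        simpa using hst
      obtain ⟨h1, h2⟩ := H s (-t) h0
      exact ⟨h1, by linarith [neg_eq_zero.mp h2]⟩
  · constructor
    · rintro ⟨h1, h2⟩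
      exact ⟨fun h => h1 (by rw [h, cross3_zero_right]),
        fun h => h2 (by rw [h, cross3_zero_right, neg_zero])⟩
    · rintro ⟨h1, h2⟩
      exact ⟨cross3_ne_zero hn ha h1, by simpa using cross3_ne_zero hn hb h2⟩

section helpers
variable {E : Type*} [NormedAddCommGroup E] [NormedSpace ℝ E]

lemma hasLineDerivAt_fst_iff {f : ℝ × ℝ → E} {p : ℝ × ℝ} {v : E} :
    HasLineDerivAt ℝ f v p ((1:ℝ), (0:ℝ)) ↔ HasDerivAt (fun u => f (u, p.2)) v p.1 := by
  have key : ∀ t : ℝ, p + t • ((1:ℝ), (0:ℝ)) = (p.1 + t, p.2) := by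
    intro t; simp [Prod.ext_iff]
  unfold HasLineDerivAt
  constructor
  · intro h
    simp only [key] at h
    have h2 := HasDerivAt.comp_sub_const p.1 p.1 (by simpa using h)
    have heq : (fun u : ℝ => f (p.1 + (u - p.1), p.2)) = fun u => f (u, p.2) := by
      funext u; congr 1; simp
    rw [← heq]; exact h2
  · intro h
    simp only [key]
    exact HasDerivAt.comp_const_add p.1 0 (by simpa using h)

lemma hasLineDerivAt_snd_iff {f : ℝ × ℝ → E} {p : ℝ × ℝ} {v : E} :
    HasLineDerivAt ℝ f v p ((0:ℝ), (1:ℝ)) ↔ HasDerivAt (fun w => f (p.1, w)) v p.2 := by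
  have key : ∀ t : ℝ, p + t • ((0:ℝ), (1:ℝ)) = (p.1, p.2 + t) := by
    intro t; simp [Prod.ext_iff]
  unfold HasLineDerivAt
  constructor
  · intro h
    simp only [key] at h
    have h2 := HasDerivAt.comp_sub_const p.2 p.2 (by simpa using h)
    have heq : (fun w : ℝ => f (p.1, p.2 + (w - p.2))) = fun w => f (p.1, w) := by
      funext w; congr 1; simp
    rw [← heq]; exact h2
  · intro h
    simp only [key]
    exact HasDerivAt.comp_const_add p.2 0 (by simpa using h)

end helpers

lemma HasLineDerivAt.cross3 {a b : ℝ × ℝ → E3} {p v : ℝ × ℝ} {a' b' : E3}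
    (ha : HasLineDerivAt ℝ a a' p v) (hb : HasLineDerivAt ℝ b b' p v) :
    HasLineDerivAt ℝ (fun q => cross3 (a q) (b q)) (cross3 a' (b p) + cross3 (a p) b') p v := by
  unfold HasLineDerivAt at *
  have h1 : HasDerivAt (fun t : ℝ => crossB (a (p + t • v))) (crossB a') 0 :=
    crossB.hasFDerivAt.comp_hasDerivAt 0 ha
  have h2 := h1.clm_apply hb
  simpa using h2

lemma hasLineDerivAt_neg {f : ℝ × ℝ → E3} {p v : ℝ × ℝ} {f' : E3}
    (h : HasLineDerivAt ℝ f f' p v) : HasLineDerivAt ℝ (fun q => -f q) (-f') p v :=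
  HasDerivAt.neg h

lemma orth_of_unit {D : Set (ℝ × ℝ)} (hD : IsOpen D) {N : ℝ × ℝ → E3}
    (hsph : ∀ p ∈ D, ‖N p‖ = 1) {p : ℝ × ℝ} (hp : p ∈ D) {v : ℝ × ℝ} {n' : E3}
    (hN : HasLineDerivAt ℝ N n' p v) : dot (N p) n' = 0 := by
  have hN' : HasDerivAt (fun t : ℝ => N (p + t • v)) n' 0 := hN
  have h1 : HasDerivAt (fun t : ℝ => (inner ℝ (N (p + t • v)) (N (p + t • v)) : ℝ))
      ((inner ℝ (N p) n' : ℝ) + inner ℝ n' (N p)) 0 := by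
    simpa using hN'.inner ℝ hN'
  have hc : ContinuousAt (fun t : ℝ => p + t • v) 0 := by fun_prop
  have hmem : ∀ᶠ t in 𝓝 (0:ℝ), p + t • v ∈ D := by
    have h0 : p + (0:ℝ) • v = p := by simp
    exact hc.eventually_mem (by rw [h0] at *; exact hD.mem_nhds hp)
  have hev : (fun t : ℝ => (inner ℝ (N (p + t • v)) (N (p + t • v)) : ℝ)) =ᶠ[𝓝 (0:ℝ)]
      fun _ => 1 := by
    filter_upwards [hmem] with t ht
    rw [real_inner_self_eq_norm_mul_norm, hsph _ ht]; norm_num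
  have h2 : HasDerivAt (fun t : ℝ => (inner ℝ (N (p + t • v)) (N (p + t • v)) : ℝ)) 0 0 :=
    (hasDerivAt_const (0:ℝ) (1:ℝ)).congr_of_eventuallyEq hev
  have huniq := h1.unique h2
  have hsymm : (inner ℝ n' (N p) : ℝ) = inner ℝ (N p) n' := real_inner_comm _ _
  rw [hsymm] at huniq
  unfold dot
  linarith

/-- `N × N_x` -/
noncomputable def crg1 (N : ℝ × ℝ → E3) : ℝ × ℝ → E3 := fun p => cross3 (N p) (pdx N p)
/-- `-N × N_y` -/
noncomputable def crg2 (N : ℝ × ℝ → E3) : ℝ × ℝ → E3 := fun p => -cross3 (N p) (pdy N p)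
/-- `N_y × N_x` -/
noncomputable def crG (N : ℝ × ℝ → E3) : ℝ × ℝ → E3 := fun p => cross3 (pdy N p) (pdx N p)
/-- The candidate ps-front, defined by iterated line integrals. -/
noncomputable def FF (N : ℝ × ℝ → E3) (x₀ y₀ : ℝ) : ℝ × ℝ → E3 :=
  fun q => (∫ t in x₀..q.1, crg1 N (t, y₀)) + ∫ s in y₀..q.2, crg2 N (q.1, s)

lemma main_construction {I J : Set ℝ} (hI : IsOpen I) (hJ : IsOpen J)
    (hIc : I.OrdConnected) (hJc : J.OrdConnected) {x₀ y₀ : ℝ} (hx₀ : x₀ ∈ I) (hy₀ : y₀ ∈ J)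
    (N : ℝ × ℝ → E3) (hN : WeakHarmonic (I ×ˢ J) N) :
    C1M (I ×ˢ J) (FF N x₀ y₀) ∧
    (∀ p ∈ I ×ˢ J, pdx (FF N x₀ y₀) p = cross3 (N p) (pdx N p) ∧
      pdy (FF N x₀ y₀) p = -cross3 (N p) (pdy N p)) := by
  have hD : IsOpen (I ×ˢ J) := hI.prod hJ
  obtain ⟨⟨hCD, hLxy, hLyx, _, _, _⟩, hsph, hreg, h, hh⟩ := hN
  -- basic differentiability facts for N
  have hNd : ∀ p ∈ I ×ˢ J, DifferentiableAt ℝ N p := fun p hp =>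
    (hCD.differentiableOn one_ne_zero).differentiableAt (hD.mem_nhds hp)
  have hNline : ∀ p ∈ I ×ˢ J, ∀ v : ℝ × ℝ, HasLineDerivAt ℝ N (lineDeriv ℝ N p v) p v := by
    intro p hp v
    have h1 := (hNd p hp).hasFDerivAt.hasLineDerivAt v
    rwa [(hNd p hp).lineDeriv_eq_fderiv]
  have hNx : ∀ p ∈ I ×ˢ J, HasLineDerivAt ℝ N (pdx N p) p ((1:ℝ),(0:ℝ)) :=
    fun p hp => hNline p hp _
  have hNy : ∀ p ∈ I ×ˢ J, HasLineDerivAt ℝ N (pdy N p) p ((0:ℝ),(1:ℝ)) :=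
    fun p hp => hNline p hp _
  -- continuity of the partial derivatives of N
  have hfderivN : ContinuousOn (fun p => fderiv ℝ N p) (I ×ˢ J) :=
    hCD.continuousOn_fderiv_of_isOpen hD le_rfl
  have cont_pdx : ContinuousOn (pdx N) (I ×ˢ J) :=
    (hfderivN.clm_apply continuousOn_const).congr
      (fun p hp => (hNd p hp).lineDeriv_eq_fderiv)
  have cont_pdy : ContinuousOn (pdy N) (I ×ˢ J) :=
    (hfderivN.clm_apply continuousOn_const).congr
      (fun p hp => (hNd p hp).lineDeriv_eq_fderiv)
  have contN : ContinuousOn N (I ×ˢ J) := hCD.continuousOn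
  have contg1 : ContinuousOn (crg1 N) (I ×ˢ J) :=
    (crossB.continuous.comp_continuousOn contN).clm_apply cont_pdx
  have contg2 : ContinuousOn (crg2 N) (I ×ˢ J) :=
    ((crossB.continuous.comp_continuousOn contN).clm_apply cont_pdy).neg
  have contG : ContinuousOn (crG N) (I ×ˢ J) :=
    (crossB.continuous.comp_continuousOn cont_pdy).clm_apply cont_pdx
  -- line derivatives of crg1 and crg2
  have hg1d : ∀ p ∈ I ×ˢ J, HasLineDerivAt ℝ (crg1 N) (crG N p) p ((0:ℝ),(1:ℝ)) := by
    intro p hp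
    have h1 : HasLineDerivAt ℝ (pdx N) (h p • N p) p ((0:ℝ),(1:ℝ)) := by
      have h0 : HasLineDerivAt ℝ (pdx N) (pdy (pdx N) p) p ((0:ℝ),(1:ℝ)) :=
        (hLxy p hp).hasLineDerivAt
      rwa [(hh p hp).1] at h0
    have h2 := (hNy p hp).cross3 h1
    have h3 : cross3 (pdy N p) (pdx N p) + cross3 (N p) (h p • N p) = crG N p := by
      rw [cross3_smul_right, cross3_self', smul_zero, add_zero]; rfl
    rw [← h3]; exact h2
  have hg2d : ∀ p ∈ I ×ˢ J, HasLineDerivAt ℝ (crg2 N) (crG N p) p ((1:ℝ),(0:ℝ)) := by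
    intro p hp
    have h1 : HasLineDerivAt ℝ (pdy N) (h p • N p) p ((1:ℝ),(0:ℝ)) := by
      have h0 : HasLineDerivAt ℝ (pdy N) (pdx (pdy N) p) p ((1:ℝ),(0:ℝ)) :=
        (hLyx p hp).hasLineDerivAt
      rwa [(hh p hp).2] at h0
    have h2 := hasLineDerivAt_neg ((hNx p hp).cross3 h1)
    have h3 : -(cross3 (pdx N p) (pdy N p) + cross3 (N p) (h p • N p)) = crG N p := by
      rw [cross3_smul_right, cross3_self', smul_zero, add_zero, cross3_skew, neg_neg]; rfl
    rw [← h3]; exact h2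
  -- interval inclusions and one-variable continuity
  have uIccI : ∀ x ∈ I, uIcc x₀ x ⊆ I := fun x hx => hIc.uIcc_subset hx₀ hx
  have uIccJ : ∀ y ∈ J, uIcc y₀ y ⊆ J := fun y hy => hJc.uIcc_subset hy₀ hy
  have g1row : ∀ y ∈ J, ContinuousOn (fun t => crg1 N (t, y)) I := fun y hy =>
    contg1.comp (Continuous.continuousOn (by fun_prop)) (fun t ht => mk_mem_prod ht hy)
  have g2col : ∀ x ∈ I, ContinuousOn (fun s => crg2 N (x, s)) J := fun x hx =>
    contg2.comp (Continuous.continuousOn (by fun_prop)) (fun s hs => mk_mem_prod hx hs)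
  have Gcol : ∀ x ∈ I, ContinuousOn (fun s => crG N (x, s)) J := fun x hx =>
    contG.comp (Continuous.continuousOn (by fun_prop)) (fun s hs => mk_mem_prod hx hs)
  -- the key derivative computations
  have key1 : ∀ x ∈ I, ∀ y ∈ J, HasDerivAt (fun u => FF N x₀ y₀ (u, y)) (crg1 N (x, y)) x := by
    intro x hx y hy
    obtain ⟨ε, hε, hball⟩ : ∃ ε > 0, closedBall x ε ⊆ I := by
      obtain ⟨ε, hε', hb⟩ := Metric.isOpen_iff.1 hI x hx
      exact ⟨ε / 2, by positivity, (closedBall_subset_ball (by linarith)).trans hb⟩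
    have hKD : closedBall x ε ×ˢ uIcc y₀ y ⊆ I ×ˢ J := prod_mono hball (uIccJ y hy)
    obtain ⟨C, hC⟩ := ((isCompact_closedBall x ε).prod isCompact_uIcc).exists_bound_of_continuousOn
      (contG.mono hKD)
    have marg : ∀ u ∈ ball x ε, ∀ s ∈ uIcc y₀ y, (u, s) ∈ I ×ˢ J := fun u hu s hs =>
      mk_mem_prod (hball (ball_subset_closedBall hu)) (uIccJ y hy hs)
    have H := intervalIntegral.hasDerivAt_integral_of_dominated_loc_of_deriv_le
        (F := fun u s => crg2 N (u, s)) (F' := fun u s => crG N (u, s)) (bound := fun _ => C)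
        (a := y₀) (b := y) (x₀ := x) (μ := volume) (ball_mem_nhds x hε) ?_ ?_ ?_ ?_ ?_ ?_
    · have intG : (∫ s in y₀..y, crG N (x, s)) = crg1 N (x, y) - crg1 N (x, y₀) := by
        apply intervalIntegral.integral_eq_sub_of_hasDerivAt
          (f := fun s => crg1 N (x, s)) (f' := fun s => crG N (x, s))
        · intro s hs
          exact hasLineDerivAt_snd_iff.1 (hg1d (x, s) (mk_mem_prod hx (uIccJ y hy hs)))
        · exact ((Gcol x hx).mono (uIccJ y hy)).intervalIntegrable
      have first : HasDerivAt (fun u => ∫ t in x₀..u, crg1 N (t, y₀)) (crg1 N (x, y₀)) x := by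
        apply intervalIntegral.integral_hasDerivAt_right
        · exact ((g1row y₀ hy₀).mono (uIccI x hx)).intervalIntegrable
        · exact (g1row y₀ hy₀).stronglyMeasurableAtFilter hI x hx
        · exact (g1row y₀ hy₀).continuousAt (hI.mem_nhds hx)
      have hsum := first.add H.2
      rw [intG] at hsum
      have harith : crg1 N (x, y₀) + (crg1 N (x, y) - crg1 N (x, y₀)) = crg1 N (x, y) := by abel
      rw [harith] at hsum
      exact hsum
    · filter_upwards [ball_mem_nhds x hε] with u hu
      exact (((g2col u (hball (ball_subset_closedBall hu))).mono
        (uIoc_subset_uIcc.trans (uIccJ y hy)))).aestronglyMeasurable measurableSet_uIoc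
    · exact ((g2col x hx).mono (uIccJ y hy)).intervalIntegrable
    · exact (((Gcol x hx).mono
        (uIoc_subset_uIcc.trans (uIccJ y hy)))).aestronglyMeasurable measurableSet_uIoc
    · apply MeasureTheory.ae_of_all
      intro s hs u hu
      exact hC (u, s) ⟨ball_subset_closedBall hu, uIoc_subset_uIcc hs⟩
    · exact intervalIntegrable_const
    · apply MeasureTheory.ae_of_all
      intro s hs u hu
      exact hasLineDerivAt_fst_iff.1 (hg2d (u, s) (marg u hu s (uIoc_subset_uIcc hs)))
  have key2 : ∀ x ∈ I, ∀ y ∈ J, HasDerivAt (fun w => FF N x₀ y₀ (x, w)) (crg2 N (x, y)) y := by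
    intro x hx y hy
    have second : HasDerivAt (fun w => ∫ s in y₀..w, crg2 N (x, s)) (crg2 N (x, y)) y := by
      apply intervalIntegral.integral_hasDerivAt_right
      · exact ((g2col x hx).mono (uIccJ y hy)).intervalIntegrable
      · exact (g2col x hx).stronglyMeasurableAtFilter hJ y hy
      · exact (g2col x hx).continuousAt (hJ.mem_nhds hy)
    have hsum := (hasDerivAt_const y (∫ t in x₀..x, crg1 N (t, y₀))).add second
    rw [zero_add] at hsum
    exact hsum
  -- the line derivatives of FF
  have hfx : ∀ p ∈ I ×ˢ J, HasLineDerivAt ℝ (FF N x₀ y₀) (crg1 N p) p ((1:ℝ),(0:ℝ)) := by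
    intro p hp
    have h1 := key1 p.1 hp.1 p.2 hp.2
    exact hasLineDerivAt_fst_iff.2 (by simpa using h1)
  have hfy : ∀ p ∈ I ×ˢ J, HasLineDerivAt ℝ (FF N x₀ y₀) (crg2 N p) p ((0:ℝ),(1:ℝ)) := by
    intro p hp
    have h1 := key2 p.1 hp.1 p.2 hp.2
    exact hasLineDerivAt_snd_iff.2 (by simpa using h1)
  have hpdxf : ∀ p ∈ I ×ˢ J, pdx (FF N x₀ y₀) p = crg1 N p := fun p hp => (hfx p hp).lineDeriv
  have hpdyf : ∀ p ∈ I ×ˢ J, pdy (FF N x₀ y₀) p = crg2 N p := fun p hp => (hfy p hp).lineDeriv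
  -- total differentiability of FF
  have hfderiv : ∀ p ∈ I ×ˢ J, HasFDerivAt (FF N x₀ y₀)
      ((ContinuousLinearMap.fst ℝ ℝ ℝ).smulRight (crg1 N p)
        + (ContinuousLinearMap.snd ℝ ℝ ℝ).smulRight (crg2 N p)) p := by
    rintro ⟨xb, yb⟩ hp
    rw [hasFDerivAt_iff_isLittleO_nhds_zero, Asymptotics.isLittleO_iff]
    intro c hc
    have hg1c : ContinuousAt (crg1 N) (xb, yb) := contg1.continuousAt (hD.mem_nhds hp)
    have hg2c : ContinuousAt (crg2 N) (xb, yb) := contg2.continuousAt (hD.mem_nhds hp)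
    have e1 : ∀ᶠ q in 𝓝 (xb, yb), ‖crg1 N q - crg1 N (xb, yb)‖ ≤ c / 2 := by
      filter_upwards [hg1c (Metric.closedBall_mem_nhds (crg1 N (xb, yb)) (half_pos hc))] with q hq
      simpa [dist_eq_norm] using hq
    have e2 : ∀ᶠ q in 𝓝 (xb, yb), ‖crg2 N q - crg2 N (xb, yb)‖ ≤ c / 2 := by
      filter_upwards [hg2c (Metric.closedBall_mem_nhds (crg2 N (xb, yb)) (half_pos hc))] with q hq
      simpa [dist_eq_norm] using hq
    have eD : ∀ᶠ q in 𝓝 (xb, yb), q ∈ I ×ˢ J := hD.mem_nhds hp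
    obtain ⟨δ, hδ, hδsub⟩ := Metric.eventually_nhds_iff_ball.1 ((e1.and e2).and eD)
    filter_upwards [Metric.ball_mem_nhds (0 : ℝ × ℝ) hδ] with q hq
    obtain ⟨q1, q2⟩ := q
    have hqn : ‖((q1 : ℝ), (q2 : ℝ))‖ < δ := by simpa using mem_ball_zero_iff.1 hq
    have hq1 : |q1| ≤ ‖((q1 : ℝ), (q2 : ℝ))‖ := by
      simpa [Real.norm_eq_abs] using norm_fst_le ((q1 : ℝ), (q2 : ℝ))
    have hq2 : |q2| ≤ ‖((q1 : ℝ), (q2 : ℝ))‖ := by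
      simpa [Real.norm_eq_abs] using norm_snd_le ((q1 : ℝ), (q2 : ℝ))
    have hI1 : ∀ t ∈ uIcc xb (xb + q1), (t, yb + q2) ∈ ball (xb, yb) δ := by
      intro t ht
      have h1 : |t - xb| ≤ |q1| := by simpa using abs_sub_left_of_mem_uIcc ht
      rw [mem_ball, Prod.dist_eq]
      apply max_lt
      · rw [Real.dist_eq]; exact lt_of_le_of_lt (h1.trans hq1) hqn
      · rw [Real.dist_eq]
        have : |yb + q2 - yb| = |q2| := by congr 1; ring
        rw [this]; exact lt_of_le_of_lt hq2 hqn
    have hJ1 : ∀ s ∈ uIcc yb (yb + q2), (xb, s) ∈ ball (xb, yb) δ := by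
      intro s hs
      have h1 : |s - yb| ≤ |q2| := by simpa using abs_sub_left_of_mem_uIcc hs
      rw [mem_ball, Prod.dist_eq]
      apply max_lt
      · rw [Real.dist_eq]; simpa using hδ
      · rw [Real.dist_eq]; exact lt_of_le_of_lt (h1.trans hq2) hqn
    have hy' : yb + q2 ∈ J := (hδsub _ (hI1 _ right_mem_uIcc)).2.2
    have hint1 : IntervalIntegrable (fun t => crg1 N (t, yb + q2)) volume xb (xb + q1) := by
      apply ContinuousOn.intervalIntegrable
      exact (g1row _ hy').mono (fun t ht => (hδsub _ (hI1 t ht)).2.1)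
    have hint2 : IntervalIntegrable (fun s => crg2 N (xb, s)) volume yb (yb + q2) := by
      apply ContinuousOn.intervalIntegrable
      exact (g2col xb hp.1).mono (fun s hs => (hδsub _ (hJ1 s hs)).2.2)
    have step1 : (∫ t in xb..xb + q1, crg1 N (t, yb + q2)) =
        FF N x₀ y₀ (xb + q1, yb + q2) - FF N x₀ y₀ (xb, yb + q2) := by
      apply intervalIntegral.integral_eq_sub_of_hasDerivAt
        (f := fun u => FF N x₀ y₀ (u, yb + q2)) (f' := fun t => crg1 N (t, yb + q2))
      · intro t ht
        exact key1 t (hδsub _ (hI1 t ht)).2.1 (yb + q2) hy'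
      · exact hint1
    have step2 : (∫ s in yb..yb + q2, crg2 N (xb, s)) =
        FF N x₀ y₀ (xb, yb + q2) - FF N x₀ y₀ (xb, yb) := by
      apply intervalIntegral.integral_eq_sub_of_hasDerivAt
        (f := fun w => FF N x₀ y₀ (xb, w)) (f' := fun s => crg2 N (xb, s))
      · intro s hs
        exact key2 xb hp.1 s (hδsub _ (hJ1 s hs)).2.2
      · exact hint2
    have c1 : (∫ _ in xb..xb + q1, crg1 N (xb, yb)) = q1 • crg1 N (xb, yb) := by
      rw [intervalIntegral.integral_const]; congr 1; ring
    have c2 : (∫ _ in yb..yb + q2, crg2 N (xb, yb)) = q2 • crg2 N (xb, yb) := by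
      rw [intervalIntegral.integral_const]; congr 1; ring
    have split1 : (∫ t in xb..xb + q1, (crg1 N (t, yb + q2) - crg1 N (xb, yb))) =
        (FF N x₀ y₀ (xb + q1, yb + q2) - FF N x₀ y₀ (xb, yb + q2)) - q1 • crg1 N (xb, yb) := by
      rw [intervalIntegral.integral_sub hint1 intervalIntegrable_const, step1, c1]
    have split2 : (∫ s in yb..yb + q2, (crg2 N (xb, s) - crg2 N (xb, yb))) =
        (FF N x₀ y₀ (xb, yb + q2) - FF N x₀ y₀ (xb, yb)) - q2 • crg2 N (xb, yb) := by
      rw [intervalIntegral.integral_sub hint2 intervalIntegrable_const, step2, c2]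
    have keyeq : FF N x₀ y₀ (xb + q1, yb + q2) - FF N x₀ y₀ (xb, yb)
        - (q1 • crg1 N (xb, yb) + q2 • crg2 N (xb, yb)) =
        (∫ t in xb..xb + q1, (crg1 N (t, yb + q2) - crg1 N (xb, yb))) +
        (∫ s in yb..yb + q2, (crg2 N (xb, s) - crg2 N (xb, yb))) := by
      rw [split1, split2]; abel
    have bnd1 : ‖∫ t in xb..xb + q1, (crg1 N (t, yb + q2) - crg1 N (xb, yb))‖
        ≤ c / 2 * |xb + q1 - xb| := by
      apply intervalIntegral.norm_integral_le_of_norm_le_const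
      intro t ht
      exact (hδsub _ (hI1 t (uIoc_subset_uIcc ht))).1.1
    have bnd2 : ‖∫ s in yb..yb + q2, (crg2 N (xb, s) - crg2 N (xb, yb))‖
        ≤ c / 2 * |yb + q2 - yb| := by
      apply intervalIntegral.norm_integral_le_of_norm_le_const
      intro s hs
      exact (hδsub _ (hJ1 s (uIoc_subset_uIcc hs))).1.2
    have habs1 : |xb + q1 - xb| = |q1| := by congr 1; ring
    have habs2 : |yb + q2 - yb| = |q2| := by congr 1; ring
    rw [habs1] at bnd1
    rw [habs2] at bnd2
    have goal_eq : FF N x₀ y₀ ((xb, yb) + (q1, q2)) - FF N x₀ y₀ (xb, yb)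
        - ((ContinuousLinearMap.fst ℝ ℝ ℝ).smulRight (crg1 N (xb, yb))
          + (ContinuousLinearMap.snd ℝ ℝ ℝ).smulRight (crg2 N (xb, yb))) (q1, q2) =
        FF N x₀ y₀ (xb + q1, yb + q2) - FF N x₀ y₀ (xb, yb)
        - (q1 • crg1 N (xb, yb) + q2 • crg2 N (xb, yb)) := by
      simp [Prod.mk_add_mk]
    rw [goal_eq, keyeq]
    calc ‖_ + _‖ ≤ c / 2 * |q1| + c / 2 * |q2| :=
          (norm_add_le _ _).trans (add_le_add bnd1 bnd2)
      _ ≤ c * ‖((q1 : ℝ), (q2 : ℝ))‖ := by nlinarith [abs_nonneg q1, abs_nonneg q2]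
  have hdiffOn : DifferentiableOn ℝ (FF N x₀ y₀) (I ×ˢ J) := fun p hp =>
    (hfderiv p hp).differentiableAt.differentiableWithinAt
  have hcontL : ContinuousOn (fun p => (ContinuousLinearMap.fst ℝ ℝ ℝ).smulRight (crg1 N p)
      + (ContinuousLinearMap.snd ℝ ℝ ℝ).smulRight (crg2 N p)) (I ×ˢ J) := by
    apply ContinuousOn.add
    · exact ((ContinuousLinearMap.smulRightL ℝ (ℝ × ℝ) E3
        (ContinuousLinearMap.fst ℝ ℝ ℝ)).continuous.comp_continuousOn contg1)
    · exact ((ContinuousLinearMap.smulRightL ℝ (ℝ × ℝ) E3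
        (ContinuousLinearMap.snd ℝ ℝ ℝ)).continuous.comp_continuousOn contg2)
  have hcontf : ContDiffOn ℝ 1 (FF N x₀ y₀) (I ×ˢ J) := by
    rw [show (1 : WithTop ℕ∞) = 0 + 1 from (zero_add 1).symm]
    refine (contDiffOn_succ_iff_fderiv_of_isOpen hD).2 ⟨hdiffOn, ?_, ?_⟩
    · intro h0; exact absurd h0 (by simp)
    · rw [contDiffOn_zero]
      exact hcontL.congr fun p hp => (hfderiv p hp).fderiv
  -- eventual equality of the partials
  have hevx : ∀ p ∈ I ×ˢ J, pdx (FF N x₀ y₀) =ᶠ[𝓝 p] crg1 N := by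
    intro p hp
    filter_upwards [hD.mem_nhds hp] with q hq using hpdxf q hq
  have hevy : ∀ p ∈ I ×ˢ J, pdy (FF N x₀ y₀) =ᶠ[𝓝 p] crg2 N := by
    intro p hp
    filter_upwards [hD.mem_nhds hp] with q hq using hpdyf q hq
  have hfxy : ∀ p ∈ I ×ˢ J, HasLineDerivAt ℝ (pdx (FF N x₀ y₀)) (crG N p) p ((0:ℝ),(1:ℝ)) :=
    fun p hp => (hg1d p hp).congr_of_eventuallyEq (hevx p hp)
  have hfyx : ∀ p ∈ I ×ˢ J, HasLineDerivAt ℝ (pdy (FF N x₀ y₀)) (crG N p) p ((1:ℝ),(0:ℝ)) :=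
    fun p hp => (hg2d p hp).congr_of_eventuallyEq (hevy p hp)
  refine ⟨⟨hcontf, fun p hp => (hfxy p hp).lineDifferentiableAt,
    fun p hp => (hfyx p hp).lineDifferentiableAt, ?_, ?_, ?_⟩, ?_⟩
  · exact contG.congr fun p hp => (hfxy p hp).lineDeriv
  · exact contG.congr fun p hp => (hfyx p hp).lineDeriv
  · exact fun p hp => ((hfxy p hp).lineDeriv).trans ((hfyx p hp).lineDeriv).symm
  · exact fun p hp => ⟨hpdxf p hp, hpdyf p hp⟩

end Aux

/-- Given a weakly harmonic `N : D → S²` on a product of open intervals `D = I × J`,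
there exists a weakly-regular C^{1M} map `f` with `f_x = N × N_x` and `f_y = −N × N_y`;
moreover, for any C¹ map `f` solving this system (with `N` merely C¹ into the sphere
with `⟨N,N_x⟩ = ⟨N,N_y⟩ = 0`), `f` is regular (resp. weakly regular) at `p` iff
`N` is regular (resp. weakly regular) at `p`. -/
theorem stmt_2 (I J : Set ℝ) (hI : IsOpen I) (hJ : IsOpen J)
    (hIc : I.OrdConnected) (hJc : J.OrdConnected)
    (N : ℝ × ℝ → E3) (hN : WeakHarmonic (I ×ˢ J) N) :
    (∃ f : ℝ × ℝ → E3, C1M (I ×ˢ J) f ∧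
      (∀ p ∈ I ×ˢ J,
        pdx f p = cross3 (N p) (pdx N p) ∧ pdy f p = -cross3 (N p) (pdy N p)) ∧
      (∀ p ∈ I ×ˢ J, pdx f p ≠ 0 ∧ pdy f p ≠ 0)) ∧
    (∀ f' N' : ℝ × ℝ → E3, ContDiffOn ℝ 1 f' (I ×ˢ J) → ContDiffOn ℝ 1 N' (I ×ˢ J) →
      (∀ p ∈ I ×ˢ J, ‖N' p‖ = 1) →
      (∀ p ∈ I ×ˢ J, dot (N' p) (pdx N' p) = 0 ∧ dot (N' p) (pdy N' p) = 0) →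
      (∀ p ∈ I ×ˢ J,
        pdx f' p = cross3 (N' p) (pdx N' p) ∧ pdy f' p = -cross3 (N' p) (pdy N' p)) →
      ∀ p ∈ I ×ˢ J,
        (LinearIndependent ℝ ![pdx f' p, pdy f' p] ↔
          LinearIndependent ℝ ![pdx N' p, pdy N' p]) ∧
        ((pdx f' p ≠ 0 ∧ pdy f' p ≠ 0) ↔ (pdx N' p ≠ 0 ∧ pdy N' p ≠ 0))) := by
  have hD : IsOpen (I ×ˢ J) := hI.prod hJ
  constructor
  · -- existence
    by_cases hne : (I ×ˢ J).Nonempty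
    · obtain ⟨⟨x₀, y₀⟩, hx₀, hy₀⟩ := hne
      obtain ⟨hC1M, hsys⟩ := main_construction hI hJ hIc hJc hx₀ hy₀ N hN
      obtain ⟨⟨hCD, _, _, _, _, _⟩, hsph, hreg, _⟩ := hN
      have hNd : ∀ p ∈ I ×ˢ J, DifferentiableAt ℝ N p := fun p hp =>
        (hCD.differentiableOn one_ne_zero).differentiableAt (hD.mem_nhds hp)
      have hNline : ∀ p ∈ I ×ˢ J, ∀ v : ℝ × ℝ, HasLineDerivAt ℝ N (lineDeriv ℝ N p v) p v := by
        intro p hp v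
        have h1 := (hNd p hp).hasFDerivAt.hasLineDerivAt v
        rwa [(hNd p hp).lineDeriv_eq_fderiv]
      refine ⟨FF N x₀ y₀, hC1M, hsys, ?_⟩
      intro p hp
      obtain ⟨hx, hy⟩ := hsys p hp
      constructor
      · rw [hx]
        exact cross3_ne_zero (hsph p hp) (orth_of_unit hD hsph hp (hNline p hp _))
          (hreg p hp).1
      · rw [hy]
        simpa [pdy] using cross3_ne_zero (hsph p hp) (orth_of_unit hD hsph hp (hNline p hp _))
          (hreg p hp).2
    · rw [Set.not_nonempty_iff_eq_empty] at hne
      refine ⟨0, ⟨contDiffOn_const, ?_, ?_, ?_, ?_, ?_⟩, ?_, ?_⟩ <;>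
        simp [hne, continuousOn_empty]
  · -- the pointwise statement
    intro f' N' _ _ hsph' horth' hsys p hp
    obtain ⟨ha, hb⟩ := horth' p hp
    obtain ⟨hfx, hfy⟩ := hsys p hp
    rw [hfx, hfy]
    exact part2_core (N' p) (pdx N' p) (pdy N' p) (hsph' p hp) ha hb

end
end

section
/- Let f : D → ℝ³ be a weakly-regular C^{1M} Chebyshev ps-front (‖f_x‖ ≡ ‖f_y‖ ≡ 1) with weakly harmonic map N, so N_xy = N_yx = h·N for some h : D → ℝ. Then at every point p ∈ D where f_x(p) and f_y(p) are linearly independent, one has h(p) = ⟨f_x(p), f_y(p)⟩; that is, N_xy = ⟨f_x, f_y⟩·N at all regular points. -/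
noncomputable section

open Real Set

/-- eventual membership along a line -/
lemma mem_evt' {D : Set (ℝ × ℝ)} (hD : IsOpen D) {q : ℝ × ℝ} (hq : q ∈ D) (v : ℝ × ℝ) :
    ∀ᶠ t in nhds (0 : ℝ), q + t • v ∈ D := by
  have hc : Continuous fun t : ℝ => q + t • v := by continuity
  exact hc.continuousAt (x := (0:ℝ)) |>.preimage_mem_nhds (by simpa using hD.mem_nhds hq)

lemma line_deriv_inner' {g k : ℝ × ℝ → E3} {g' k' : E3} {q v : ℝ × ℝ}
    (hg : HasLineDerivAt ℝ g g' q v) (hk : HasLineDerivAt ℝ k k' q v) :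
    HasDerivAt (fun t : ℝ => (inner ℝ (g (q + t • v)) (k (q + t • v)) : ℝ))
      ((inner ℝ (g q) k' : ℝ) + inner ℝ g' (k q)) 0 := by
  have H := HasDerivAt.inner ℝ (hg : HasDerivAt (fun t : ℝ => g (q + t • v)) g' 0)
    (hk : HasDerivAt (fun t : ℝ => k (q + t • v)) k' 0)
  simpa using H

/-- orthogonality: derivative of unit field is orthogonal to it -/
lemma ortho' {D : Set (ℝ × ℝ)} (hD : IsOpen D) {N : ℝ × ℝ → E3}
    (hsph : ∀ r ∈ D, ‖N r‖ = 1) {q v : ℝ × ℝ} (hq : q ∈ D) {w : E3}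
    (hN : HasLineDerivAt ℝ N w q v) : (inner ℝ w (N q) : ℝ) = 0 := by
  have H := line_deriv_inner' hN hN
  have hev : (fun t : ℝ => (inner ℝ (N (q + t • v)) (N (q + t • v)) : ℝ)) =ᶠ[nhds (0:ℝ)]
      (fun _ => (1:ℝ)) := by
    filter_upwards [mem_evt' hD hq v] with t ht
    rw [real_inner_self_eq_norm_sq, hsph _ ht]; norm_num
  have H2 : HasDerivAt (fun t : ℝ => (inner ℝ (N (q + t • v)) (N (q + t • v)) : ℝ)) 0 0 :=
    (hasDerivAt_const (0:ℝ) (1:ℝ)).congr_of_eventuallyEq hev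
  have hu := H.unique H2
  have hsymm : (inner ℝ (N q) w : ℝ) = inner ℝ w (N q) := real_inner_comm _ _
  rw [hsymm] at hu
  linarith

/-- For a weakly-regular C^{1M} Chebyshev ps-front with harmonicity factor `h`
(`N_xy = N_yx = h • N`), one has `h = ⟨f_x,f_y⟩` at every regular point, i.e.
`N_xy = ⟨f_x,f_y⟩ • N` at all points where `f_x`, `f_y` are linearly independent. -/
theorem stmt_8 (D : Set (ℝ × ℝ)) (hD : IsOpen D)
    (f N : ℝ × ℝ → E3) (hps : PsFront D f N)
    (hE : ∀ p ∈ D, ‖pdx f p‖ = 1) (hG : ∀ p ∈ D, ‖pdy f p‖ = 1)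
    (h : ℝ × ℝ → ℝ)
    (hh : ∀ p ∈ D, pdy (pdx N) p = h p • N p ∧ pdx (pdy N) p = h p • N p) :
    ∀ p ∈ D, LinearIndependent ℝ ![pdx f p, pdy f p] →
      h p = dot (pdx f p) (pdy f p) ∧
      pdy (pdx N) p = dot (pdx f p) (pdy f p) • N p := by
  obtain ⟨hC1f, hregf, hWH, hcross⟩ := hps
  obtain ⟨hC1N, hsph, hregN, -⟩ := hWH
  intro p hp _
  have hdiff : ∀ q ∈ D, DifferentiableAt ℝ N q := fun q hq =>
    (hC1N.1.contDiffAt (hD.mem_nhds hq)).differentiableAt one_ne_zero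
  have hLx : ∀ q ∈ D, HasLineDerivAt ℝ N (pdx N q) q ((1:ℝ),(0:ℝ)) := fun q hq =>
    (((hdiff q hq).hasFDerivAt.hasLineDerivAt _).lineDifferentiableAt).hasLineDerivAt
  have hLy : ∀ q ∈ D, HasLineDerivAt ℝ N (pdy N q) q ((0:ℝ),(1:ℝ)) := fun q hq =>
    (((hdiff q hq).hasFDerivAt.hasLineDerivAt _).lineDifferentiableAt).hasLineDerivAt
  have hxo : ∀ q ∈ D, (inner ℝ (pdx N q) (N q) : ℝ) = 0 := fun q hq =>
    ortho' hD hsph hq (hLx q hq)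
  have hA : HasLineDerivAt ℝ (pdx N) (pdy (pdx N) p) p ((0:ℝ),(1:ℝ)) :=
    (hC1N.2.1 p hp).hasLineDerivAt
  have H := line_deriv_inner' hA (hLy p hp)
  have hev : (fun t : ℝ => (inner ℝ (pdx N (p + t • ((0:ℝ),(1:ℝ)))) (N (p + t • ((0:ℝ),(1:ℝ)))) : ℝ))
      =ᶠ[nhds (0:ℝ)] (fun _ => (0:ℝ)) := by
    filter_upwards [mem_evt' hD hp ((0:ℝ),(1:ℝ))] with t ht
    exact hxo _ ht
  have H2 : HasDerivAt (fun t : ℝ =>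
      (inner ℝ (pdx N (p + t • ((0:ℝ),(1:ℝ)))) (N (p + t • ((0:ℝ),(1:ℝ)))) : ℝ)) 0 0 :=
    (hasDerivAt_const (0:ℝ) (0:ℝ)).congr_of_eventuallyEq hev
  have key := H.unique H2
  rw [(hh p hp).1, real_inner_smul_left, real_inner_self_eq_norm_sq, hsph p hp] at key
  have hhp : h p = -(inner ℝ (pdx N p) (pdy N p) : ℝ) := by
    have : (inner ℝ (pdx N p) (pdy N p) : ℝ) + h p * 1 ^ 2 = 0 := key
    linarith
  have hnn : (inner ℝ (N p) (N p) : ℝ) = 1 := by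
    rw [real_inner_self_eq_norm_sq, hsph p hp]; norm_num
  have hxo' := hxo p hp
  have hmain : h p = dot (pdx f p) (pdy f p) := by
    rw [(hcross p hp).1, (hcross p hp).2]
    simp only [dot, cross3, inner_neg_right, PiLp.inner_apply, Fin.sum_univ_three,
      RCLike.inner_apply, conj_trivial, WithLp.equiv_symm_apply, WithLp.ofLp_toLp,
      Matrix.cons_val_zero, Matrix.cons_val_one, Matrix.head_cons,
      Matrix.cons_val_two, Matrix.tail_cons] at hhp hnn hxo' ⊢
    rw [hhp]
    linear_combination (pdx N p 0 * pdy N p 0 + pdx N p 1 * pdy N p 1 +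
        pdx N p 2 * pdy N p 2) * hnn -
      (N p 0 * pdy N p 0 + N p 1 * pdy N p 1 + N p 2 * pdy N p 2) * hxo'
  exact ⟨hmain, by rw [(hh p hp).1, hmain]⟩


end
end

section
/- Let D ⊆ ℝ² be open and f : D → ℝ³ a regular C^{1M} immersion with ‖f_x‖ ≡ 1 and ‖f_y‖ ≡ 1. Let θ : D → (0,π) be continuous with cos θ = ⟨f_x, f_y⟩, and set N := (f_x × f_y)/sin θ. Assume N is C¹ and that ⟨f_x, N_x⟩ = 0, ⟨f_y, N_y⟩ = 0, and f_xy = (sin θ)·N on D. Then the mixed partial derivatives N_xy and N_yx exist at every point of D and N_xy = N_yx = (cos θ)·N; in particular N is C^{1M} and weakly harmonic with harmonicity factor cos θ. -/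
noncomputable section

open Real Set

namespace Aux12

lemma dot_eq (a b : E3) : dot a b = a 0 * b 0 + a 1 * b 1 + a 2 * b 2 := by
  simp [dot, PiLp.inner_apply, Fin.sum_univ_three]; ring

lemma cross3_apply (a b : E3) (i : Fin 3) :
    cross3 a b i = ![a 1 * b 2 - a 2 * b 1, a 2 * b 0 - a 0 * b 2, a 0 * b 1 - a 1 * b 0] i := rfl

lemma triple (u v w : E3) : cross3 u (cross3 v w) = dot u w • v - dot u v • w := by
  ext i; fin_cases i <;>
    simp [cross3_apply, dot_eq, PiLp.smul_apply, PiLp.sub_apply, smul_eq_mul] <;> ring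

lemma lagrange (u v : E3) :
    dot (cross3 u v) (cross3 u v) + (dot u v)^2 = dot u u * dot v v := by
  simp [cross3_apply, dot_eq]; ring

lemma dot_comm (a b : E3) : dot a b = dot b a := by simp [dot_eq]; ring
lemma dot_smul_left (r : ℝ) (a b : E3) : dot (r • a) b = r * dot a b := by
  simp [dot, inner_smul_left]
lemma dot_smul_right (r : ℝ) (a b : E3) : dot a (r • b) = r * dot a b := by
  simp [dot, inner_smul_right]
lemma dot_sub_left (a b c : E3) : dot (a - b) c = dot a c - dot b c := by
  simp [dot, inner_sub_left]
lemma dot_sub_right (a b c : E3) : dot a (b - c) = dot a b - dot a c := by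
  simp [dot, inner_sub_right]
lemma dot_self_eq_zero {a : E3} : dot a a = 0 ↔ a = 0 := by
  rw [dot]; exact inner_self_eq_zero
lemma dot_zero_left (a : E3) : dot 0 a = 0 := by simp [dot]
lemma dot_cross_self_left (a b : E3) : dot a (cross3 a b) = 0 := by
  simp [cross3_apply, dot_eq]; ring
lemma dot_cross_self_right (a b : E3) : dot b (cross3 a b) = 0 := by
  simp [cross3_apply, dot_eq]; ring
lemma cross3_anticomm (a b : E3) : cross3 a b = -cross3 b a := by
  ext i; fin_cases i <;> simp [cross3_apply] <;> ring
lemma cross3_self (a : E3) : cross3 a a = 0 := by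
  ext i; fin_cases i <;> simp [cross3_apply] <;> ring
lemma cross3_smul_left (r : ℝ) (a b : E3) : cross3 (r • a) b = r • cross3 a b := by
  ext i; fin_cases i <;> simp [cross3_apply, PiLp.smul_apply, smul_eq_mul] <;> ring
lemma cross3_smul_right (r : ℝ) (a b : E3) : cross3 a (r • b) = r • cross3 a b := by
  ext i; fin_cases i <;> simp [cross3_apply, PiLp.smul_apply, smul_eq_mul] <;> ring
lemma cross3_neg_right (a b : E3) : cross3 a (-b) = -cross3 a b := by
  ext i; fin_cases i <;> simp [cross3_apply] <;> ring
lemma dot_neg_left (a b : E3) : dot (-a) b = -dot a b := by simp [dot_eq]; ring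
lemma dot_neg_right (a b : E3) : dot a (-b) = -dot a b := by simp [dot_eq]; ring

lemma zero_of_dot_cross {w c : E3} (h1 : dot w c = 0) (h2 : cross3 w c = 0)
    (hc : dot c c ≠ 0) : w = 0 := by
  have hl := lagrange w c
  rw [h2, h1, dot_zero_left] at hl
  norm_num at hl
  rcases hl with h | h
  · exact dot_self_eq_zero.mp h
  · exact absurd h hc

lemma eq_of_three_dots {a b : E3} (w₁ w₂ : E3)
    (hab : dot (cross3 a b) (cross3 a b) ≠ 0)
    (h1 : dot w₁ a = dot w₂ a) (h2 : dot w₁ b = dot w₂ b)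
    (h3 : dot w₁ (cross3 a b) = dot w₂ (cross3 a b)) : w₁ = w₂ := by
  have hw : w₁ - w₂ = 0 := by
    apply zero_of_dot_cross (c := cross3 a b)
    · rw [dot_sub_left, h3, sub_self]
    · rw [triple, dot_sub_left, dot_sub_left, h1, h2, sub_self, sub_self]
      simp
    · exact hab
  exact sub_eq_zero.mp hw

noncomputable def crossL : E3 →ₗ[ℝ] E3 →ₗ[ℝ] E3 :=
  LinearMap.mk₂ ℝ cross3
    (by intro a a' b; ext i; fin_cases i <;> simp [cross3_apply] <;> ring)
    (by intro r a b; ext i; fin_cases i <;> simp [cross3_apply] <;> ring)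
    (by intro a b b'; ext i; fin_cases i <;> simp [cross3_apply] <;> ring)
    (by intro r a b; ext i; fin_cases i <;> simp [cross3_apply] <;> ring)

noncomputable def crossCLM : E3 →L[ℝ] E3 →L[ℝ] E3 :=
  LinearMap.toContinuousLinearMap
    ((LinearMap.toContinuousLinearMap :
        (E3 →ₗ[ℝ] E3) ≃ₗ[ℝ] (E3 →L[ℝ] E3)).toLinearMap.comp crossL)

lemma crossCLM_apply (a b : E3) : crossCLM a b = cross3 a b := by
  simp [crossCLM, crossL]

lemma HasDerivAt.cross3' {u v : ℝ → E3} {u' v' : E3} {t : ℝ}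
    (hu : HasDerivAt u u' t) (hv : HasDerivAt v v' t) :
    HasDerivAt (fun s => cross3 (u s) (v s)) (cross3 u' (v t) + cross3 (u t) v') t := by
  have h := (crossCLM.isBoundedBilinearMap.hasFDerivAt (u t, v t)).comp_hasDerivAt t (hu.prodMk hv)
  have heq : (crossCLM.isBoundedBilinearMap.deriv (u t, v t)) (u', v')
      = cross3 u' (v t) + cross3 (u t) v' := by
    rw [IsBoundedBilinearMap.deriv_apply]
    simp [crossCLM_apply, add_comm]
  simp only [Function.comp_def, crossCLM_apply] at h
  exact h.congr_deriv heq

end Aux12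


/-- For a regular C^{1M} immersion in asymptotic Chebyshev coordinates with `K = −1`,
the mixed partials `N_xy` and `N_yx` of the normal exist everywhere on `D` and
`N_xy = N_yx = (cos θ) • N`; in particular `N` is C^{1M} and weakly harmonic with
harmonicity factor `cos θ`. -/
theorem stmt_12 (D : Set (ℝ × ℝ)) (hD : IsOpen D)
    (f N : ℝ × ℝ → E3) (θ : ℝ × ℝ → ℝ)
    (hf : C1M D f)
    (hreg : ∀ p ∈ D, LinearIndependent ℝ ![pdx f p, pdy f p])
    (hE : ∀ p ∈ D, ‖pdx f p‖ = 1) (hG : ∀ p ∈ D, ‖pdy f p‖ = 1)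
    (hθc : ContinuousOn θ D) (hθr : ∀ p ∈ D, θ p ∈ Set.Ioo 0 π)
    (hcos : ∀ p ∈ D, Real.cos (θ p) = dot (pdx f p) (pdy f p))
    (hNdef : ∀ p ∈ D, N p = (Real.sin (θ p))⁻¹ • cross3 (pdx f p) (pdy f p))
    (hN : ContDiffOn ℝ 1 N D)
    (hasx : ∀ p ∈ D, dot (pdx f p) (pdx N p) = 0)
    (hasy : ∀ p ∈ D, dot (pdy f p) (pdy N p) = 0)
    (hfxy : ∀ p ∈ D, pdy (pdx f) p = Real.sin (θ p) • N p) :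
    (∀ p ∈ D, LineDifferentiableAt ℝ (pdx N) p ((0 : ℝ), (1 : ℝ))) ∧
    (∀ p ∈ D, LineDifferentiableAt ℝ (pdy N) p ((1 : ℝ), (0 : ℝ))) ∧
    (∀ p ∈ D, pdy (pdx N) p = Real.cos (θ p) • N p ∧
      pdx (pdy N) p = Real.cos (θ p) • N p) ∧
    C1M D N ∧ WeakHarmonic D N := by
  obtain ⟨hf1, hfx2, hfy2, hfc1, hfc2, hfsym⟩ := hf
  have hs : ∀ p ∈ D, 0 < Real.sin (θ p) := fun p hp =>
    Real.sin_pos_of_pos_of_lt_pi (hθr p hp).1 (hθr p hp).2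
  have haa : ∀ p ∈ D, dot (pdx f p) (pdx f p) = 1 := by
    intro p hp
    rw [dot, real_inner_self_eq_norm_mul_norm, hE p hp]; norm_num
  have hbb : ∀ p ∈ D, dot (pdy f p) (pdy f p) = 1 := by
    intro p hp
    rw [dot, real_inner_self_eq_norm_mul_norm, hG p hp]; norm_num
  have hcc : ∀ p ∈ D, Real.sin (θ p) ^ 2 = 1 - Real.cos (θ p) ^ 2 := by
    intro p hp
    have := Real.sin_sq_add_cos_sq (θ p); linarith
  have hcab : ∀ p ∈ D, dot (cross3 (pdx f p) (pdy f p)) (cross3 (pdx f p) (pdy f p))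
      = Real.sin (θ p) ^ 2 := by
    intro p hp
    have h := Aux12.lagrange (pdx f p) (pdy f p)
    rw [haa p hp, hbb p hp, ← hcos p hp, hcc p hp] at *
    linarith
  have hcabne : ∀ p ∈ D, dot (cross3 (pdx f p) (pdy f p)) (cross3 (pdx f p) (pdy f p)) ≠ 0 := by
    intro p hp
    rw [hcab p hp]
    exact pow_ne_zero _ (ne_of_gt (hs p hp))
  have habN : ∀ p ∈ D, cross3 (pdx f p) (pdy f p) = Real.sin (θ p) • N p := by
    intro p hp
    rw [hNdef p hp, smul_smul, mul_inv_cancel₀ (ne_of_gt (hs p hp)), one_smul]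
  have hna : ∀ p ∈ D, dot (N p) (pdx f p) = 0 := by
    intro p hp
    rw [hNdef p hp, Aux12.dot_smul_left, Aux12.dot_comm, Aux12.dot_cross_self_left, mul_zero]
  have hnb : ∀ p ∈ D, dot (N p) (pdy f p) = 0 := by
    intro p hp
    rw [hNdef p hp, Aux12.dot_smul_left, Aux12.dot_comm, Aux12.dot_cross_self_right, mul_zero]
  have hnn : ∀ p ∈ D, dot (N p) (N p) = 1 := by
    intro p hp
    rw [hNdef p hp, Aux12.dot_smul_left, Aux12.dot_smul_right, hcab p hp]
    have := ne_of_gt (hs p hp)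
    field_simp
  have hNunit : ∀ p ∈ D, ‖N p‖ = 1 := by
    intro p hp
    have h := hnn p hp
    rw [dot, real_inner_self_eq_norm_mul_norm] at h
    nlinarith [norm_nonneg (N p)]
  -- curve facts
  have hmemD : ∀ p ∈ D, ∀ v : ℝ × ℝ, ∀ᶠ t : ℝ in nhds 0, p + t • v ∈ D := by
    intro p hp v
    have hco : Filter.Tendsto (fun t : ℝ => p + t • v) (nhds 0) (nhds p) := by
      have hcont : Continuous fun t : ℝ => p + t • v := by fun_prop
      have := hcont.tendsto 0
      simpa using this
    exact hco.eventually (hD.eventually_mem hp)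
  have hNc : ∀ p ∈ D, ∀ v : ℝ × ℝ, HasLineDerivAt ℝ N (lineDeriv ℝ N p v) p v := by
    intro p hp v
    have hNd : DifferentiableAt ℝ N p :=
      (hN.differentiableOn one_ne_zero).differentiableAt (hD.mem_nhds hp)
    rw [hNd.lineDeriv_eq_fderiv]
    exact hNd.hasFDerivAt.hasLineDerivAt v
  -- derivative of <N,N> = 1
  have hdNN : ∀ p ∈ D, ∀ v : ℝ × ℝ, dot (N p) (lineDeriv ℝ N p v) = 0 := by
    intro p hp v
    have h1 : HasDerivAt (fun t : ℝ => N (p + t • v)) (lineDeriv ℝ N p v) 0 := hNc p hp v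
    have h2 := HasDerivAt.inner (𝕜 := ℝ) h1 h1
    simp only [zero_smul, add_zero] at h2
    have h3 : (fun t : ℝ => (inner ℝ (N (p + t • v)) (N (p + t • v)) : ℝ))
        =ᶠ[nhds (0:ℝ)] fun _ => (1:ℝ) := by
      filter_upwards [hmemD p hp v] with t ht
      exact hnn _ ht
    have h4 := (h2.congr_of_eventuallyEq h3.symm).unique (hasDerivAt_const 0 (1:ℝ))
    have h5 := real_inner_comm (N p) (lineDeriv ℝ N p v)
    have h6 : dot (N p) (lineDeriv ℝ N p v) = inner ℝ (N p) (lineDeriv ℝ N p v) := rfl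
    rw [h6]
    linarith [h4, h5]
  -- derivative of <N, f_y> = 0 in x direction
  have hNbx : ∀ p ∈ D, dot (lineDeriv ℝ N p ((1:ℝ),(0:ℝ))) (pdy f p) = -Real.sin (θ p) := by
    intro p hp
    have h1 : HasDerivAt (fun t : ℝ => N (p + t • ((1:ℝ),(0:ℝ))))
        (lineDeriv ℝ N p ((1:ℝ),(0:ℝ))) 0 := hNc p hp _
    have h2 : HasDerivAt (fun t : ℝ => pdy f (p + t • ((1:ℝ),(0:ℝ)))) (pdx (pdy f) p) 0 :=
      (hfy2 p hp).hasLineDerivAt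
    have h3 := HasDerivAt.inner (𝕜 := ℝ) h1 h2
    simp only [zero_smul, add_zero] at h3
    have h4 : (fun t : ℝ => (inner ℝ (N (p + t • ((1:ℝ),(0:ℝ)))) (pdy f (p + t • ((1:ℝ),(0:ℝ)))) : ℝ))
        =ᶠ[nhds (0:ℝ)] fun _ => (0:ℝ) := by
      filter_upwards [hmemD p hp _] with t ht
      exact hnb _ ht
    have h5 := (h3.congr_of_eventuallyEq h4.symm).unique (hasDerivAt_const 0 (0:ℝ))
    have h6 : (inner ℝ (N p) (pdx (pdy f) p) : ℝ) = Real.sin (θ p) := by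
      have h7 : pdx (pdy f) p = Real.sin (θ p) • N p := by
        rw [← hfsym p hp, hfxy p hp]
      rw [h7, real_inner_smul_right]
      have := hnn p hp
      rw [dot] at this
      rw [this, mul_one]
    rw [h6] at h5
    have h8 : dot (lineDeriv ℝ N p ((1:ℝ),(0:ℝ))) (pdy f p)
        = inner ℝ (lineDeriv ℝ N p ((1:ℝ),(0:ℝ))) (pdy f p) := rfl
    rw [h8]; linarith
  -- derivative of <N, f_x> = 0 in y direction
  have hNay : ∀ p ∈ D, dot (lineDeriv ℝ N p ((0:ℝ),(1:ℝ))) (pdx f p) = -Real.sin (θ p) := by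
    intro p hp
    have h1 : HasDerivAt (fun t : ℝ => N (p + t • ((0:ℝ),(1:ℝ))))
        (lineDeriv ℝ N p ((0:ℝ),(1:ℝ))) 0 := hNc p hp _
    have h2 : HasDerivAt (fun t : ℝ => pdx f (p + t • ((0:ℝ),(1:ℝ)))) (pdy (pdx f) p) 0 :=
      (hfx2 p hp).hasLineDerivAt
    have h3 := HasDerivAt.inner (𝕜 := ℝ) h1 h2
    simp only [zero_smul, add_zero] at h3
    have h4 : (fun t : ℝ => (inner ℝ (N (p + t • ((0:ℝ),(1:ℝ)))) (pdx f (p + t • ((0:ℝ),(1:ℝ)))) : ℝ))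
        =ᶠ[nhds (0:ℝ)] fun _ => (0:ℝ) := by
      filter_upwards [hmemD p hp _] with t ht
      exact hna _ ht
    have h5 := (h3.congr_of_eventuallyEq h4.symm).unique (hasDerivAt_const 0 (0:ℝ))
    have h6 : (inner ℝ (N p) (pdy (pdx f) p) : ℝ) = Real.sin (θ p) := by
      rw [hfxy p hp, real_inner_smul_right]
      have := hnn p hp
      rw [dot] at this
      rw [this, mul_one]
    rw [h6] at h5
    have h8 : dot (lineDeriv ℝ N p ((0:ℝ),(1:ℝ))) (pdx f p)
        = inner ℝ (lineDeriv ℝ N p ((0:ℝ),(1:ℝ))) (pdx f p) := rfl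
    rw [h8]; linarith
  -- Key identity A : N_x = f_x × N
  have keyA : ∀ p ∈ D, pdx N p = cross3 (pdx f p) (N p) := by
    intro p hp
    apply Aux12.eq_of_three_dots (a := pdx f p) (b := pdy f p) _ _ (hcabne p hp)
    · have h1 : dot (pdx N p) (pdx f p) = 0 := by
        rw [Aux12.dot_comm]; exact hasx p hp
      have h2 : dot (cross3 (pdx f p) (N p)) (pdx f p) = 0 := by
        rw [Aux12.dot_comm, Aux12.dot_cross_self_left]
      rw [h1, h2]
    · have h1 : dot (pdx N p) (pdy f p) = -Real.sin (θ p) := hNbx p hp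
      have h2 : dot (cross3 (pdx f p) (N p)) (pdy f p) = -Real.sin (θ p) := by
        rw [hNdef p hp, Aux12.cross3_smul_right, Aux12.dot_smul_left, Aux12.triple,
          Aux12.dot_sub_left, Aux12.dot_smul_left, Aux12.dot_smul_left,
          haa p hp, hbb p hp, ← hcos p hp]
        have hssq := hcc p hp
        have hsne := ne_of_gt (hs p hp)
        field_simp
        nlinarith [hssq]
      rw [h1, h2]
    · rw [habN p hp, Aux12.dot_smul_right, Aux12.dot_smul_right]
      have h1 : dot (pdx N p) (N p) = 0 := by
        rw [Aux12.dot_comm]; exact hdNN p hp _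
      have h2 : dot (cross3 (pdx f p) (N p)) (N p) = 0 := by
        rw [Aux12.dot_comm, Aux12.dot_cross_self_right]
      rw [h1, h2]
  -- Key identity B : N_y = N × f_y
  have keyB : ∀ p ∈ D, pdy N p = cross3 (N p) (pdy f p) := by
    intro p hp
    apply Aux12.eq_of_three_dots (a := pdx f p) (b := pdy f p) _ _ (hcabne p hp)
    · have h1 : dot (pdy N p) (pdx f p) = -Real.sin (θ p) := hNay p hp
      have h2 : dot (cross3 (N p) (pdy f p)) (pdx f p) = -Real.sin (θ p) := by
        rw [hNdef p hp, Aux12.cross3_smul_left, Aux12.dot_smul_left,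
          Aux12.cross3_anticomm (cross3 (pdx f p) (pdy f p)) (pdy f p)]
        rw [show cross3 (pdy f p) (cross3 (pdx f p) (pdy f p))
            = dot (pdy f p) (pdy f p) • pdx f p - dot (pdy f p) (pdx f p) • pdy f p from
          Aux12.triple _ _ _]
        rw [Aux12.dot_neg_left, Aux12.dot_sub_left, Aux12.dot_smul_left, Aux12.dot_smul_left,
          hbb p hp, Aux12.dot_comm (pdy f p) (pdx f p), ← hcos p hp, haa p hp]
        have hssq := hcc p hp
        have hsne := ne_of_gt (hs p hp)
        field_simp
        nlinarith [hssq]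
      rw [h1, h2]
    · have h1 : dot (pdy N p) (pdy f p) = 0 := by
        rw [Aux12.dot_comm]; exact hasy p hp
      have h2 : dot (cross3 (N p) (pdy f p)) (pdy f p) = 0 := by
        rw [Aux12.dot_comm, Aux12.dot_cross_self_right]
      rw [h1, h2]
    · rw [habN p hp, Aux12.dot_smul_right, Aux12.dot_smul_right]
      have h1 : dot (pdy N p) (N p) = 0 := by
        rw [Aux12.dot_comm]; exact hdNN p hp _
      have h2 : dot (cross3 (N p) (pdy f p)) (N p) = 0 := by
        rw [Aux12.dot_comm, Aux12.dot_cross_self_left]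
      rw [h1, h2]
  -- mixed partials
  have hmixA : ∀ p ∈ D, HasLineDerivAt ℝ (pdx N) (Real.cos (θ p) • N p) p ((0:ℝ),(1:ℝ)) := by
    intro p hp
    have hu : HasDerivAt (fun t : ℝ => pdx f (p + t • ((0:ℝ),(1:ℝ)))) (pdy (pdx f) p) 0 :=
      (hfx2 p hp).hasLineDerivAt
    have hv : HasDerivAt (fun t : ℝ => N (p + t • ((0:ℝ),(1:ℝ))))
        (lineDeriv ℝ N p ((0:ℝ),(1:ℝ))) 0 := hNc p hp _
    have hprod := Aux12.HasDerivAt.cross3' hu hv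
    simp only [zero_smul, add_zero] at hprod
    have hval : cross3 (pdy (pdx f) p) (N p) + cross3 (pdx f p) (lineDeriv ℝ N p ((0:ℝ),(1:ℝ)))
        = Real.cos (θ p) • N p := by
      have e1' : lineDeriv ℝ N p ((0:ℝ),(1:ℝ)) = pdy N p := rfl
      rw [e1', keyB p hp, hfxy p hp, Aux12.cross3_smul_left, Aux12.cross3_self, smul_zero,
        zero_add, Aux12.triple,
        show dot (pdx f p) (N p) = 0 from by rw [Aux12.dot_comm]; exact hna p hp,
        ← hcos p hp, zero_smul, sub_zero]
    have heq : pdx N =ᶠ[nhds p] fun q => cross3 (pdx f q) (N q) :=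
      Filter.eventuallyEq_of_mem (hD.mem_nhds hp) (fun q hq => keyA q hq)
    rw [← hval]
    exact heq.hasLineDerivAt_iff.mpr hprod
  have hmixB : ∀ p ∈ D, HasLineDerivAt ℝ (pdy N) (Real.cos (θ p) • N p) p ((1:ℝ),(0:ℝ)) := by
    intro p hp
    have hv : HasDerivAt (fun t : ℝ => pdy f (p + t • ((1:ℝ),(0:ℝ)))) (pdx (pdy f) p) 0 :=
      (hfy2 p hp).hasLineDerivAt
    have hu : HasDerivAt (fun t : ℝ => N (p + t • ((1:ℝ),(0:ℝ))))
        (lineDeriv ℝ N p ((1:ℝ),(0:ℝ))) 0 := hNc p hp _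
    have hprod := Aux12.HasDerivAt.cross3' hu hv
    simp only [zero_smul, add_zero] at hprod
    have hval : cross3 (lineDeriv ℝ N p ((1:ℝ),(0:ℝ))) (pdy f p) + cross3 (N p) (pdx (pdy f) p)
        = Real.cos (θ p) • N p := by
      have e1' : lineDeriv ℝ N p ((1:ℝ),(0:ℝ)) = pdx N p := rfl
      have h7 : pdx (pdy f) p = Real.sin (θ p) • N p := by rw [← hfsym p hp, hfxy p hp]
      rw [e1', keyA p hp, h7, Aux12.cross3_smul_right, Aux12.cross3_self, smul_zero, add_zero,
        Aux12.cross3_anticomm (cross3 (pdx f p) (N p)) (pdy f p)]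
      rw [show cross3 (pdy f p) (cross3 (pdx f p) (N p))
          = dot (pdy f p) (N p) • pdx f p - dot (pdy f p) (pdx f p) • N p from
        Aux12.triple _ _ _]
      rw [show dot (pdy f p) (N p) = 0 from by rw [Aux12.dot_comm]; exact hnb p hp,
        Aux12.dot_comm (pdy f p) (pdx f p), ← hcos p hp, zero_smul, zero_sub, neg_neg]
    have heq : pdy N =ᶠ[nhds p] fun q => cross3 (N q) (pdy f q) :=
      Filter.eventuallyEq_of_mem (hD.mem_nhds hp) (fun q hq => keyB q hq)
    rw [← hval]
    exact heq.hasLineDerivAt_iff.mpr hprod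
  have hLDx : ∀ p ∈ D, LineDifferentiableAt ℝ (pdx N) p ((0:ℝ),(1:ℝ)) :=
    fun p hp => (hmixA p hp).lineDifferentiableAt
  have hLDy : ∀ p ∈ D, LineDifferentiableAt ℝ (pdy N) p ((1:ℝ),(0:ℝ)) :=
    fun p hp => (hmixB p hp).lineDifferentiableAt
  have hvalxy : ∀ p ∈ D, pdy (pdx N) p = Real.cos (θ p) • N p :=
    fun p hp => (hmixA p hp).lineDeriv
  have hvalyx : ∀ p ∈ D, pdx (pdy N) p = Real.cos (θ p) • N p :=
    fun p hp => (hmixB p hp).lineDeriv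
  have hcont1 : ContinuousOn (pdy (pdx N)) D :=
    (((Real.continuous_cos.comp_continuousOn hθc)).smul hN.continuousOn).congr
      (fun p hp => hvalxy p hp)
  have hcont2 : ContinuousOn (pdx (pdy N)) D :=
    (((Real.continuous_cos.comp_continuousOn hθc)).smul hN.continuousOn).congr
      (fun p hp => hvalyx p hp)
  have hC1M : C1M D N :=
    ⟨hN, hLDx, hLDy, hcont1, hcont2, fun p hp => by rw [hvalxy p hp, hvalyx p hp]⟩
  refine ⟨hLDx, hLDy, fun p hp => ⟨hvalxy p hp, hvalyx p hp⟩, hC1M,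
    hC1M, hNunit, ?_, ⟨fun p => Real.cos (θ p), fun p hp => ⟨hvalxy p hp, hvalyx p hp⟩⟩⟩
  intro p hp
  constructor
  · intro h
    have hx := hNbx p hp
    have : (pdx N p) = lineDeriv ℝ N p ((1:ℝ),(0:ℝ)) := rfl
    rw [← this, h, Aux12.dot_zero_left] at hx
    linarith [hs p hp]
  · intro h
    have hy := hNay p hp
    have : (pdy N p) = lineDeriv ℝ N p ((0:ℝ),(1:ℝ)) := rfl
    rw [← this, h, Aux12.dot_zero_left] at hy
    linarith [hs p hp]

end
end
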